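/- Let q be a prime power and k ≤ n ≤ m positive integers. Let g = (g_1, …, g_n) ∈ F_{q^m}^n have coordinates linearly independent over F_q, and let Gab(g) be the F_{q^m}-linear code generated by the k×n Moore matrix G with entries G_{ij} = g_j^{q^{i-1}}. Then every nonzero codeword c ∈ Gab(g) has rank weight Rk(c) ≥ n − k + 1, where Rk(c) is the dimension over F_q of the F_q-subspace of F_{q^m} spanned by the coordinates of c. Equivalently, the minimum rank distance of Gab(g) is at least n − k + 1. -/

import Mathlib

open Matrix

/-- The rank weight of a vector over the extension `K` of `Fq`: the dimension over `Fq`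
of the `Fq`-subspace of `K` spanned by the coordinates of the vector. -/
noncomputable def rankWeight (Fq : Type) {K : Type} [Field Fq] [Field K] [Algebra Fq K]
    {ι : Type} (v : ι → K) : ℕ :=
  Module.finrank Fq (Submodule.span Fq (Set.range v))

/-- **Minimum rank distance of Gabidulin codes.**
For `K = F_{q^m}` with subfield `F_q` and `k ≤ n ≤ m`, let `Gab(g)` be the code
generated by the `k × n` Moore matrix `G = (g_j^{q^{i-1}})` with the coordinates of
`g` linearly independent over `F_q`. Then every nonzero codeword has rank weight at
least `n − k + 1`. -/
theorem gabidulin_minimum_rank_distance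
    (q m n k : ℕ) (hq : IsPrimePow q) (hk : 0 < k) (hkn : k ≤ n) (hnm : n ≤ m)
    (Fq K : Type) [Field Fq] [Fintype Fq] (hFq : Fintype.card Fq = q)
    [Field K] [Fintype K] [Algebra Fq K] (hK : Fintype.card K = q ^ m)
    (g : Fin n → K) (hg : LinearIndependent Fq g)
    (G : Matrix (Fin k) (Fin n) K)
    (hG : ∀ (i : Fin k) (j : Fin n), G i j = g j ^ q ^ (i : ℕ)) :
    ∀ c ∈ Submodule.span K (Set.range fun i : Fin k => G i),
      c ≠ 0 → n - k + 1 ≤ rankWeight Fq c := by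
  classical
  intro c hc hc0
  obtain ⟨x, hxc⟩ := (Submodule.mem_span_range_iff_exists_fun K).mp hc
  have hx0 : x ≠ 0 := by
    rintro rfl
    exact hc0 (by rw [← hxc]; simp)
  obtain ⟨i₀, hi₀⟩ := Function.ne_iff.mp hx0
  have hq2 : 2 ≤ q := hq.two_le
  -- characteristic facts
  obtain ⟨p, hp⟩ := CharP.exists K
  haveI := hp
  obtain ⟨t, hpprime, hcard⟩ := FiniteField.card K p
  haveI : Fact p.Prime := ⟨hpprime⟩
  obtain ⟨r, e, hrp, he, hre⟩ := hq
  have hrP : r.Prime := Nat.prime_iff.mpr hrp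
  have hm : 1 ≤ m := le_trans (le_trans hk hkn) hnm
  have hqe : q = p ^ e := by
    have hrdvd : r ∣ p ^ (t : ℕ) := by
      rw [← hcard, hK, ← hre]
      exact dvd_pow (dvd_pow_self r he.ne') (by positivity)
    have : r = p := (Nat.prime_dvd_prime_iff_eq hrP hpprime).mp
      (hrP.dvd_of_dvd_pow hrdvd)
    rw [← hre, this]
  have hfrob : ∀ (a b : K) (j : ℕ), (a + b) ^ q ^ j = a ^ q ^ j + b ^ q ^ j := by
    intro a b j
    have hqj : q ^ j = p ^ (e * j) := by rw [pow_mul, hqe]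
    rw [hqj, add_pow_char_pow]
  have halg : ∀ (a : Fq) (j : ℕ), (algebraMap Fq K a) ^ q ^ j = algebraMap Fq K a := by
    intro a j
    induction j with
    | zero => simp
    | succ j ih =>
      rw [pow_succ, pow_mul, ih, ← map_pow, show q = Fintype.card Fq from hFq.symm,
        FiniteField.pow_card]
  -- the linearized polynomial as an Fq-linear map
  set φ : K →ₗ[Fq] K :=
    { toFun := fun y => ∑ i : Fin k, x i * y ^ q ^ (i : ℕ)
      map_add' := by
        intro a b
        simp only [hfrob, mul_add]
        rw [Finset.sum_add_distrib]
      map_smul' := by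
        intro a y
        simp only [Algebra.smul_def, RingHom.id_apply, mul_pow, halg, Finset.mul_sum]
        exact Finset.sum_congr rfl fun i _ => by ring } with hφdef
  have hcfun : c = fun j => φ (g j) := by
    funext j
    rw [← hxc]
    simp [hφdef, hG, Finset.sum_apply]
  -- the polynomial
  set P : Polynomial K := ∑ i : Fin k, Polynomial.C (x i) * Polynomial.X ^ (q ^ (i : ℕ))
    with hPdef
  have heval : ∀ y : K, P.eval y = φ y := by
    intro y
    simp [hPdef, hφdef, Polynomial.eval_finset_sum]
  have hcoeff : P.coeff (q ^ (i₀ : ℕ)) = x i₀ := by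
    rw [hPdef, Polynomial.finset_sum_coeff, Finset.sum_eq_single i₀]
    · simp [Polynomial.coeff_C_mul, Polynomial.coeff_X_pow]
    · intro i _ hne
      rw [Polynomial.coeff_C_mul, Polynomial.coeff_X_pow, if_neg, mul_zero]
      intro h
      exact hne (Fin.ext (Nat.pow_right_injective hq2 h.symm))
    · simp
  have hP0 : P ≠ 0 := fun h => hi₀ (by simpa [h] using hcoeff.symm)
  have hdeg : P.natDegree ≤ q ^ (k - 1) := by
    apply Polynomial.natDegree_sum_le_of_forall_le
    intro i _
    exact le_trans (Polynomial.natDegree_C_mul_X_pow_le _ _)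
      (Nat.pow_le_pow_right (by omega) (by omega))
  -- the kernel is small
  haveI : Module.Finite Fq K := Module.Finite.of_finite
  set W := LinearMap.ker φ with hWdef
  haveI : Fintype ↥W := Fintype.ofFinite _
  have hcardW : Fintype.card ↥W = q ^ Module.finrank Fq ↥W := by
    rw [Module.card_eq_pow_finrank (K := Fq), hFq]
  have hWcard : Fintype.card ↥W ≤ P.natDegree := by
    have hroot : ∀ y : K, y ∈ W → y ∈ P.roots.toFinset := by
      intro y hy
      rw [Multiset.mem_toFinset, Polynomial.mem_roots hP0]
      exact show P.eval y = 0 by rw [heval]; exact hy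
    calc Fintype.card ↥W
        ≤ Fintype.card {z // z ∈ P.roots.toFinset} :=
          Fintype.card_le_of_injective
            (fun y => ⟨y.1, hroot y.1 y.2⟩)
            (fun a b hab => Subtype.ext (Subtype.mk_eq_mk.mp hab))
      _ = P.roots.toFinset.card := Fintype.card_coe _
      _ ≤ Multiset.card P.roots := Multiset.toFinset_card_le _
      _ ≤ P.natDegree := Polynomial.card_roots' P
  have hdW : Module.finrank Fq ↥W ≤ k - 1 := by
    have h1 : q ^ Module.finrank Fq ↥W ≤ q ^ (k - 1) := by
      rw [← hcardW]; exact le_trans hWcard hdeg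
    exact (Nat.pow_le_pow_iff_right (by omega)).mp h1
  -- rank-nullity on the span of g
  set V := Submodule.span Fq (Set.range g) with hVdef
  have hV : Module.finrank Fq ↥V = n := by
    rw [hVdef, finrank_span_eq_card hg, Fintype.card_fin]
  set ψ : ↥V →ₗ[Fq] K := φ.comp V.subtype with hψdef
  have hrn := LinearMap.finrank_range_add_finrank_ker ψ
  have hrange : LinearMap.range ψ = Submodule.map φ V := by
    rw [hψdef, LinearMap.range_comp, Submodule.range_subtype]
  have hker : Module.finrank Fq ↥(LinearMap.ker ψ) ≤ Module.finrank Fq ↥W := by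
    have h1 : (LinearMap.ker ψ).map V.subtype ≤ W := by
      rintro _ ⟨y, hy, rfl⟩
      exact hy
    have h2 : Module.finrank Fq ↥((LinearMap.ker ψ).map V.subtype)
        = Module.finrank Fq ↥(LinearMap.ker ψ) :=
      (Submodule.equivMapOfInjective V.subtype (Submodule.injective_subtype V)
        _).finrank_eq.symm
    rw [← h2]
    exact Submodule.finrank_mono h1
  have key : rankWeight Fq c = Module.finrank Fq ↥(LinearMap.range ψ) := by
    have hrc : Set.range c = ⇑φ '' Set.range g := by
      rw [hcfun]; exact Set.range_comp ⇑φ g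
    rw [rankWeight, hrc, Submodule.span_image, ← hVdef, ← hrange]
  rw [key]
  omega
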